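/- The Hessian of log J satisfies the exact identity ∇² log J(ψ) = ((1−ν)/ω²) I_n + ((1−ν)/ω²)² ∑_{j=1}^M λ_j (f_λ − f_j)(f_λ − f_j)^⊤, where λ_j ∝ π_j exp(−‖f_j − Y‖²/(2ω²) + (1−ν)‖ψ − f_j‖²/(2ω²)) and f_λ = ∑_j λ_j f_j. -/

import Mathlib

open Real Finset RealInnerProductSpace


private lemma logJ_aux (M : ℕ) (p A B : Fin M → ℝ) (T c ip : ℝ) (hT : T ≠ 0)
    (hsum : ∑ j, p j = T) :
    T⁻¹ * (∑ j, (2*c*p j*ip + B j * (2*c*(2*c*p j*A j))))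
      + (∑ j, 2*c*p j*B j) * (-(T^2)⁻¹ * ∑ j, 2*c*p j*A j)
    = 2*c*ip + (2*c)^2 * ∑ j, (p j / T) *
        ((A j - T⁻¹ * ∑ k, p k * A k) * (B j - T⁻¹ * ∑ k, p k * B k)) := by
  set SA := ∑ k, p k * A k with hSA
  set SB := ∑ k, p k * B k with hSB
  have e1 : ∑ j, (2*c*p j*ip + B j * (2*c*(2*c*p j*A j)))
      = (2*c*ip)*T + (4*c^2) * ∑ j, p j*(A j*B j) := by
    rw [Finset.sum_add_distrib]
    congr 1
    · rw [Finset.sum_congr rfl (fun j _ => by ring :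
        ∀ j ∈ Finset.univ, 2*c*p j*ip = (2*c*ip)*p j), ← Finset.mul_sum, hsum]
    · rw [Finset.sum_congr rfl (fun j _ => by ring :
        ∀ j ∈ Finset.univ, B j * (2*c*(2*c*p j*A j)) = (4*c^2)*(p j*(A j*B j))),
        ← Finset.mul_sum]
  have e2 : ∑ j, 2*c*p j*B j = 2*c*SB := by
    rw [Finset.sum_congr rfl (fun j _ => by ring :
      ∀ j ∈ Finset.univ, 2*c*p j*B j = (2*c)*(p j*B j)), ← Finset.mul_sum, hSB]
  have e3 : ∑ j, 2*c*p j*A j = 2*c*SA := by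
    rw [Finset.sum_congr rfl (fun j _ => by ring :
      ∀ j ∈ Finset.univ, 2*c*p j*A j = (2*c)*(p j*A j)), ← Finset.mul_sum, hSA]
  have e4 : ∑ j, (p j / T) * ((A j - T⁻¹ * SA) * (B j - T⁻¹ * SB))
      = T⁻¹*(∑ j, p j*(A j*B j)) - T⁻¹*T⁻¹*(SA*SB) := by
    have expand : ∀ j ∈ Finset.univ, (p j / T) * ((A j - T⁻¹*SA) * (B j - T⁻¹*SB))
        = T⁻¹*(p j*(A j*B j)) - (T⁻¹*T⁻¹*SB)*(p j*A j) - (T⁻¹*T⁻¹*SA)*(p j*B j)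
          + (T⁻¹*T⁻¹*T⁻¹*(SA*SB))*p j := by
      intro j _
      field_simp
      ring
    rw [Finset.sum_congr rfl expand, Finset.sum_add_distrib, Finset.sum_sub_distrib,
      Finset.sum_sub_distrib, ← Finset.mul_sum, ← Finset.mul_sum, ← Finset.mul_sum,
      ← Finset.mul_sum, ← hSA, ← hSB, hsum]
    field_simp
    ring
  rw [e1, e2, e3, e4]
  field_simp
  ring

theorem logJ_hessian_identity (n M : ℕ) (Y : EuclideanSpace ℝ (Fin n))
    (f : Fin M → EuclideanSpace ℝ (Fin n)) (pi : Fin M → ℝ)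
    (hpi : ∀ j, 0 < pi j) (hpi1 : ∑ j, pi j = 1)
    (ν ω : ℝ) (hν : ν ∈ Set.Ioo (0:ℝ) 1) (hω : 0 < ω)
    (J : EuclideanSpace ℝ (Fin n) → ℝ)
    (hJ : ∀ ψ, J ψ = ∑ j, pi j *
      Real.exp (-‖f j - Y‖^2 / (2*ω^2) + (1-ν) * ‖ψ - f j‖^2 / (2*ω^2)))
    (lam : EuclideanSpace ℝ (Fin n) → Fin M → ℝ)
    (hlam : ∀ ψ j, lam ψ j =
      pi j * Real.exp (-‖f j - Y‖^2 / (2*ω^2) + (1-ν) * ‖ψ - f j‖^2 / (2*ω^2)) / J ψ)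
    (flam : EuclideanSpace ℝ (Fin n) → EuclideanSpace ℝ (Fin n))
    (hflam : ∀ ψ, flam ψ = ∑ j, lam ψ j • f j) :
    ∀ ψ v w, iteratedFDeriv ℝ 2 (fun ψ => Real.log (J ψ)) ψ ![v, w]
      = ((1-ν)/ω^2) * ⟪v, w⟫
        + ((1-ν)/ω^2)^2 * ∑ j, lam ψ j * (⟪flam ψ - f j, v⟫ * ⟪flam ψ - f j, w⟫) := by
  intro ψ v w
  obtain ⟨hν0, hν1⟩ := hν
  have hM : (Finset.univ : Finset (Fin M)).Nonempty := by
    rcases Nat.eq_zero_or_pos M with h | h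
    · exfalso; subst h; simp at hpi1
    · exact ⟨⟨0, h⟩, Finset.mem_univ _⟩
  obtain ⟨a, ha⟩ : ∃ a : ℝ, (1-ν)/(2*ω^2) = a := ⟨_, rfl⟩
  have ha0 : 0 < a := by
    rw [← ha]; apply div_pos (by linarith) (by positivity)
  set φ : EuclideanSpace ℝ (Fin n) → Fin M → ℝ := fun y j =>
    pi j * Real.exp (-‖f j - Y‖^2 / (2*ω^2) + (1-ν) * ‖y - f j‖^2 / (2*ω^2)) with hφ
  have hJφ : ∀ y, J y = ∑ j, φ y j := hJ
  have hφpos : ∀ y j, 0 < φ y j := fun y j => mul_pos (hpi j) (Real.exp_pos _)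
  have hJpos : ∀ y, 0 < J y := fun y => (hJφ y) ▸ Finset.sum_pos (fun j _ => hφpos y j) hM
  have hJne : ∀ y, J y ≠ 0 := fun y => (hJpos y).ne'
  -- derivative of each φ
  have hφd : ∀ y j, HasFDerivAt (fun z => φ z j) ((2*a*φ y j) • innerSL ℝ (y - f j)) y := by
    intro y j
    have h1 : HasFDerivAt (fun z : EuclideanSpace ℝ (Fin n) => ‖z - f j‖^2)
        (2 • (innerSL ℝ (y - f j))) y := by
      simpa using ((hasFDerivAt_id y).sub_const (f j)).norm_sq
    have he : (fun z => φ z j) = fun z =>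
        pi j * Real.exp (-‖f j - Y‖^2 / (2*ω^2) + a * ‖z - f j‖^2) := by
      funext z
      have hz : (1-ν) * ‖z - f j‖^2 / (2*ω^2) = a * ‖z - f j‖^2 := by rw [← ha]; ring
      simp only [hφ, hz]
    rw [he]
    have h2 := (((h1.const_mul a).const_add (-‖f j - Y‖^2 / (2*ω^2))).exp).const_mul (pi j)
    refine h2.congr_fderiv ?_
    ext z
    have hy : (1-ν) * ‖y - f j‖^2 / (2*ω^2) = a * ‖y - f j‖^2 := by rw [← ha]; ring
    simp only [hφ, hy, ContinuousLinearMap.smul_apply, innerSL_apply_apply, smul_eq_mul,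
      ContinuousLinearMap.coe_smul', Pi.smul_apply, two_smul, ContinuousLinearMap.add_apply]
    ring
  have hJd : ∀ y, HasFDerivAt J (∑ j, (2*a*φ y j) • innerSL ℝ (y - f j)) y := by
    intro y
    have h := HasFDerivAt.sum (fun j (_ : j ∈ Finset.univ) => hφd y j)
    exact h.congr_of_eventuallyEq (Filter.Eventually.of_forall (fun y => by rw [hJφ y, Finset.sum_apply]))
  have hFd : ∀ y, HasFDerivAt (fun z => Real.log (J z))
      ((J y)⁻¹ • ∑ j, (2*a*φ y j) • innerSL ℝ (y - f j)) y :=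
    fun y => (hJd y).log (hJne y)
  -- smoothness
  have hCJ : ContDiff ℝ 2 J := by
    have : ContDiff ℝ 2 (fun y => ∑ j, φ y j) := by
      apply ContDiff.sum
      intro j _
      exact contDiff_const.mul ((contDiff_const.add
        ((contDiff_const.mul ((contDiff_id.sub contDiff_const).norm_sq ℝ)).div_const
          (2*ω^2))).exp)
    exact (funext hJφ : J = _) ▸ this
  have hC : ContDiff ℝ 2 (fun z => Real.log (J z)) := hCJ.log hJne
  have hd2 : DifferentiableAt ℝ (fderiv ℝ (fun z => Real.log (J z))) ψ :=
    ((hC.fderiv_right (le_refl 2)).differentiable one_ne_zero) ψ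
  rw [iteratedFDeriv_two_apply]
  simp only [Matrix.cons_val_zero, Matrix.cons_val_one, Matrix.head_cons]
  have hswap : fderiv ℝ (fderiv ℝ (fun z => Real.log (J z))) ψ v w
      = fderiv ℝ (fun y => fderiv ℝ (fun z => Real.log (J z)) y w) ψ v := by
    rw [fderiv_clm_apply hd2 (differentiableAt_const w)]
    simp
  rw [hswap]
  have hfw : (fun y => fderiv ℝ (fun z => Real.log (J z)) y w)
      = fun y => (J y)⁻¹ * ∑ j, (2*a*φ y j) * ⟪y - f j, w⟫ := by
    funext y
    rw [(hFd y).fderiv]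
    simp only [ContinuousLinearMap.coe_smul', Pi.smul_apply, ContinuousLinearMap.coe_sum',
      Finset.sum_apply, ContinuousLinearMap.smul_apply, innerSL_apply_apply, smul_eq_mul]
  rw [hfw]
  -- derivative of inner products
  have hIp : ∀ (u : EuclideanSpace ℝ (Fin n)) j,
      HasFDerivAt (fun y : EuclideanSpace ℝ (Fin n) => ⟪y - f j, u⟫) (innerSL ℝ u) ψ := by
    intro u j
    have h0 : (fun y : EuclideanSpace ℝ (Fin n) => ⟪y - f j, u⟫)
        = fun y => (innerSL ℝ u) (y - f j) := by
      funext y; rw [innerSL_apply_apply]; exact real_inner_comm _ _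
    rw [h0]
    simpa [Function.comp_def] using ((innerSL ℝ u).hasFDerivAt.comp ψ ((hasFDerivAt_id ψ).sub_const (f j)))
  have hsum : HasFDerivAt (fun y => ∑ j, (2*a*φ y j) * ⟪y - f j, w⟫)
      (∑ j, ((2*a*φ ψ j) • innerSL ℝ w
        + ⟪ψ - f j, w⟫ • ((2*a) • ((2*a*φ ψ j) • innerSL ℝ (ψ - f j))))) ψ :=
    HasFDerivAt.fun_sum fun j _ => ((hφd ψ j).const_mul (2*a)).fun_mul (hIp w j)
  have hinv : HasFDerivAt (fun y => (J y)⁻¹)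
      ((-(J ψ ^ 2)⁻¹) • ∑ j, (2*a*φ ψ j) • innerSL ℝ (ψ - f j)) ψ :=
    (hasDerivAt_inv (hJne ψ)).comp_hasFDerivAt ψ (hJd ψ)
  have htot := hinv.fun_mul hsum
  rw [htot.fderiv]
  simp only [ContinuousLinearMap.add_apply, ContinuousLinearMap.coe_smul', Pi.smul_apply,
    ContinuousLinearMap.coe_sum', Finset.sum_apply, ContinuousLinearMap.smul_apply,
    innerSL_apply_apply, smul_eq_mul]
  have hlam' : ∀ j, lam ψ j = φ ψ j / J ψ := fun j => by rw [hlam ψ j, hφ]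
  have h2a : (1-ν)/ω^2 = 2*a := by
    rw [← ha]; field_simp
  have hsum_p : ∑ j, φ ψ j = J ψ := (hJφ ψ).symm
  have hT := hJne ψ
  have hflam_inner : ∀ (u : EuclideanSpace ℝ (Fin n)) j, ⟪flam ψ - f j, u⟫
      = ⟪ψ - f j, u⟫ - (J ψ)⁻¹ * ∑ k, φ ψ k * ⟪ψ - f k, u⟫ := by
    intro u j
    rw [inner_sub_left, hflam, sum_inner]
    simp only [real_inner_smul_left, hlam', inner_sub_left, mul_sub]
    rw [Finset.sum_sub_distrib, ← Finset.sum_mul, hsum_p]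
    rw [Finset.sum_congr rfl (fun k _ => by rw [div_mul_eq_mul_div, div_eq_inv_mul] :
      ∀ k ∈ Finset.univ, (φ ψ k / J ψ) * ⟪f k, u⟫ = (J ψ)⁻¹ * (φ ψ k * ⟪f k, u⟫)),
      ← Finset.mul_sum]
    field_simp
    ring
  rw [h2a]
  simp only [hflam_inner v, hflam_inner w, hlam', real_inner_comm w v]
  exact logJ_aux M (fun j => φ ψ j) (fun j => ⟪ψ - f j, v⟫) (fun j => ⟪ψ - f j, w⟫)
    (J ψ) a ⟪w, v⟫ hT hsum_p
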